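/- If φ^{t+1}(n) = φ^t(n) - μ_t φ^t(n+1), ψ^t(n) = φ^{t-1}(n) - μ_t φ^{t-1}(n+1), and P^t φ^{t-1}(n) = ψ^t(n) - μ_t ψ^t(n-1) hold for all n and t, where P^t = (1 - p μ_t)(1 - p^{-1} μ_t), then φ^{t+1}(n) = ψ^t(n) - μ_{t-1} ψ^t(n+1) for all n and t. -/
import Mathlib

/-- the linear relations imply φ^{t+1}(n) = ψ^t(n) - μ_{t-1} ψ^t(n+1). -/
theorem stmt_0 (φ ψ : ℤ → ℤ → ℂ) (μ : ℤ → ℂ) (p : ℂ)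
    (hμ : ∀ t, μ t ≠ 0) (hp : p ≠ 0)
    (h1 : ∀ t n, φ (t + 1) n = φ t n - μ t * φ t (n + 1))
    (h2 : ∀ t n, ψ t n = φ (t - 1) n - μ t * φ (t - 1) (n + 1))
    (h3 : ∀ t n, (1 - p * μ t) * (1 - p⁻¹ * μ t) * φ (t - 1) n
          = ψ t n - μ t * ψ t (n - 1)) :
    ∀ t n, φ (t + 1) n = ψ t n - μ (t - 1) * ψ t (n + 1) := by
  intro t n
  have B := h1 (t - 1) n
  have B' := h1 (t - 1) (n + 1)
  rw [sub_add_cancel] at B B'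
  rw [h1 t n, h2 t n, h2 t (n + 1), B, B']
  ring
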